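/- Suppose N is even. Then the directed graph 𝒢_{f_0 ∘ F_{f_0}} (with edges labeled by indices m ∈ {1,...,N}, where following edge m from x leads to the vector obtained by flipping all bits of x except the m-th) is strongly connected. -/

import Mathlib

/-- `h_m` flips every bit except the `m`-th one. -/
def hflip {N : ℕ} (m : Fin N) (x : Fin N → Bool) : Fin N → Bool :=
  fun j => if j = m then x j else !(x j)

lemma hflip_hflip {N : ℕ} (a b : Fin N) (hab : a ≠ b) (x : Fin N → Bool) (j : Fin N) :
    hflip b (hflip a x) j = if j = a ∨ j = b then !(x j) else x j := by
  simp only [hflip]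
  by_cases h1 : j = a <;> by_cases h2 : j = b <;> simp_all

lemma even_case {N : ℕ} : ∀ n (x y : Fin N → Bool),
    (Finset.univ.filter (fun j => x j ≠ y j)).card = n → Even n →
    ∃ L : List (Fin N), L.foldl (fun v m => hflip m v) x = y := by
  intro n
  induction n using Nat.strong_induction_on with
  | _ n ih =>
    intro x y hcard hev
    rcases Nat.eq_zero_or_pos n with h0 | hpos
    · subst h0
      have hDe : Finset.univ.filter (fun j => x j ≠ y j) = ∅ :=
        Finset.card_eq_zero.mp hcard
      refine ⟨[], funext fun j => ?_⟩
      simp only [List.foldl_nil]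
      by_contra hj
      have hjm : j ∈ Finset.univ.filter (fun j => x j ≠ y j) := by
        simp only [Finset.mem_filter, Finset.mem_univ, true_and]; exact hj
      simp [hDe] at hjm
    · have hD1 : 0 < (Finset.univ.filter (fun j => x j ≠ y j)).card := hcard ▸ hpos
      obtain ⟨a, ha⟩ := Finset.card_pos.mp hD1
      have hn2 : 2 ≤ n := by obtain ⟨k, hk⟩ := hev; omega
      have hDe : 0 < ((Finset.univ.filter (fun j => x j ≠ y j)).erase a).card := by
        rw [Finset.card_erase_of_mem ha, hcard]; omega
      obtain ⟨b, hb⟩ := Finset.card_pos.mp hDe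
      have hba : b ≠ a := Finset.ne_of_mem_erase hb
      have hbD : b ∈ Finset.univ.filter (fun j => x j ≠ y j) := Finset.mem_of_mem_erase hb
      have hax : x a ≠ y a := by simpa using ha
      have hbx : x b ≠ y b := by simpa using hbD
      have hD' : Finset.univ.filter (fun j => hflip b (hflip a x) j ≠ y j) =
          ((Finset.univ.filter (fun j => x j ≠ y j)).erase a).erase b := by
        ext j
        simp only [Finset.mem_filter, Finset.mem_univ, true_and, Finset.mem_erase,
          hflip_hflip a b (Ne.symm hba) x j]
        by_cases h1 : j = a
        · subst h1
          simp only [true_or, if_pos, Ne.symm hba]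
          cases hx : x j <;> cases hy : y j <;> simp_all
        · by_cases h2 : j = b
          · subst h2
            simp only [or_true, if_pos]
            cases hx : x j <;> cases hy : y j <;> simp_all
          · simp [h1, h2]
      have hcard' : (Finset.univ.filter (fun j => hflip b (hflip a x) j ≠ y j)).card
          = n - 2 := by
        rw [hD', Finset.card_erase_of_mem hb, Finset.card_erase_of_mem ha, hcard]; omega
      have hev' : Even (n - 2) := by obtain ⟨k, hk⟩ := hev; exact ⟨k - 1, by omega⟩
      obtain ⟨L, hL⟩ := ih (n - 2) (by omega) (hflip b (hflip a x)) y hcard' hev'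
      exact ⟨a :: b :: L, hL⟩

/-- if `N` is even, the graph `𝒢_{f_0 ∘ F_{f_0}}` (edge `m` from `x`
flips all bits except the `m`-th) is strongly connected. -/
theorem graph_neg_strongly_connected (N : ℕ) (hN : Even N) (x y : Fin N → Bool) :
    ∃ L : List (Fin N), L.foldl (fun v m => hflip m v) x = y := by
  by_cases hev : Even (Finset.univ.filter (fun j => x j ≠ y j)).card
  · exact even_case _ x y rfl hev
  · have hpos : 0 < (Finset.univ.filter (fun j => x j ≠ y j)).card :=
      Nat.pos_of_ne_zero (fun h => hev (h ▸ Even.zero))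
    obtain ⟨a, ha⟩ := Finset.card_pos.mp hpos
    have hax : x a ≠ y a := by simpa using ha
    have haeq : a ∉ Finset.univ.filter (fun j => x j = y j) := by simp [hax]
    have hD' : Finset.univ.filter (fun j => hflip a x j ≠ y j) =
        insert a (Finset.univ.filter (fun j => x j = y j)) := by
      ext j
      simp only [Finset.mem_filter, Finset.mem_univ, true_and, Finset.mem_insert, hflip]
      by_cases h1 : j = a
      · subst h1; simp [hax]; exact Finset.mem_filter.mpr ⟨Finset.mem_univ _, by simpa using hax⟩
      · simp only [if_neg h1, h1, false_or]
        cases hx : x j <;> cases hy : y j <;> simp_all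
    have hsum : (Finset.univ.filter (fun j => x j = y j)).card
        + (Finset.univ.filter (fun j => x j ≠ y j)).card = N := by
      have h := Finset.card_filter_add_card_filter_not
        (s := (Finset.univ : Finset (Fin N))) (p := fun j => x j = y j)
      simpa [ne_eq] using h
    have hcard' : (Finset.univ.filter (fun j => hflip a x j ≠ y j)).card
        = (Finset.univ.filter (fun j => x j = y j)).card + 1 := by
      rw [hD', Finset.card_insert_of_notMem haeq]
    have hev' : Even ((Finset.univ.filter (fun j => x j = y j)).card + 1) := by
      rw [Nat.even_iff] at hN ⊢
      rw [Nat.not_even_iff] at hev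
      omega
    obtain ⟨L, hL⟩ := even_case _ (hflip a x) y hcard' hev'
    exact ⟨a :: L, hL⟩
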